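/- For every f ∈ C↑_sur(b^ω), the set Y_f = {max f⁻¹(W_s) : s ∈ b^{<ω}} \ {max b^ω} is a subset of A_b that is order isomorphic to ℚ under ≤_lex. -/

import Mathlib

noncomputable section
open Classical

/-- Lexicographic strict order on `ℕ → Fin b`. -/
def lexLT (b : ℕ) (x y : ℕ → Fin b) : Prop :=
  ∃ n, (∀ m, m < n → x m = y m) ∧ x n < y n

/-- Lexicographic order `≤_lex` on `ℕ → Fin b`. -/
def lexLE (b : ℕ) (x y : ℕ → Fin b) : Prop := x = y ∨ lexLT b x y

def IsGreatestLex (b : ℕ) (S : Set (ℕ → Fin b)) (x : ℕ → Fin b) : Prop :=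
  x ∈ S ∧ ∀ y ∈ S, lexLE b y x

def IsLeastLex (b : ℕ) (S : Set (ℕ → Fin b)) (x : ℕ → Fin b) : Prop :=
  x ∈ S ∧ ∀ y ∈ S, lexLE b x y

/-- `S` is an interval for the lexicographic order. -/
def LexInterval (b : ℕ) (S : Set (ℕ → Fin b)) : Prop :=
  ∀ x ∈ S, ∀ y ∈ S, ∀ z, lexLE b x z → lexLE b z y → z ∈ S

/-- The basic clopen set of sequences extending the finite sequence `s`. -/
def W (b : ℕ) (s : List (Fin b)) : Set (ℕ → Fin b) :=
  {x | ∀ i, (hi : i < s.length) → x i = s.get ⟨i, hi⟩}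

/-- Continuous nondecreasing surjections of `b^ω`, i.e. members of `C↑_sur(b^ω)`. -/
def CSur (b : ℕ) (f : (ℕ → Fin b) → (ℕ → Fin b)) : Prop :=
  Continuous f ∧ Function.Surjective f ∧ ∀ x y, lexLE b x y → lexLE b (f x) (f y)

/-- A filtering on `b^ω`. -/
def Filtering (b : ℕ) (U : List (Fin b) → Set (ℕ → Fin b)) : Prop :=
  (∀ s, (U s).Nonempty ∧ IsClopen (U s) ∧ LexInterval b (U s)) ∧
  U [] = Set.univ ∧
  (∀ s, U s = ⋃ i : Fin b, U (s ++ [i])) ∧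
  (∀ s, ∀ i j : Fin b, i ≠ j → Disjoint (U (s ++ [i])) (U (s ++ [j]))) ∧
  (∀ s, ∀ i j : Fin b, i < j → ∀ x y,
    IsGreatestLex b (U (s ++ [i])) x → IsGreatestLex b (U (s ++ [j])) y → lexLT b x y)

/-- `A_b`: sequences eventually equal to `b-1` (the top of `Fin b`), except the constant
top sequence (the lexicographic maximum of `b^ω`). -/
def AbSet (b : ℕ) : Set (ℕ → Fin b) :=
  {x | (∃ N, ∀ n, N ≤ n → ∀ j : Fin b, j ≤ x n) ∧ ¬ ∀ n, ∀ j : Fin b, j ≤ x n}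

/-- `Y` is order isomorphic to `ℚ` with respect to the lexicographic order. -/
def OrderIsoQ (b : ℕ) (Y : Set (ℕ → Fin b)) : Prop :=
  ∃ e : ℚ ≃ Y, ∀ p q : ℚ, p ≤ q ↔ lexLE b (e p).1 (e q).1

/-- `Y_f = {max f⁻¹(W_s) : s ∈ b^{<ω}} \ {max b^ω}`. -/
def Yset (b : ℕ) (f : (ℕ → Fin b) → (ℕ → Fin b)) : Set (ℕ → Fin b) :=
  {x | (∃ s : List (Fin b), IsGreatestLex b (f ⁻¹' W b s) x) ∧ ¬ ∀ n, ∀ j : Fin b, j ≤ x n}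

/-- The metric `ρ_b` on `b^ω`. -/
def rhoB (b : ℕ) (x y : ℕ → Fin b) : ℝ :=
  if h : x = y then 0 else (2 : ℝ) ^ (-(Nat.find (Function.ne_iff.mp h) : ℤ))

/-- The sup-metric `ρ_∞` on `C↑_sur(b^ω)`. -/
def rhoInf (b : ℕ) (f g : (ℕ → Fin b) → (ℕ → Fin b)) : ℝ :=
  ⨆ x, rhoB b (f x) (g x)

/-- `⌊log₂(1/ε)⌋ + 1`. -/
def kOf (ε : ℝ) : ℕ := ⌊Real.logb 2 (1 / ε)⌋₊ + 1

/-- The `l`-th odd tangent number `t_l = tan^{(2l-1)}(0)`. -/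
def oddTangent (l : ℕ) : ℝ := iteratedDeriv (2 * l - 1) Real.tan 0

/-- The lexicographically increasing enumeration of `b^k`: `sEnum b k hb i` is the
`i`-th element of `b^k` in lexicographic order (base-`b` digits, most significant first). -/
def sEnum (b k : ℕ) (hb : 0 < b) (i : ℕ) : List (Fin b) :=
  List.ofFn fun j : Fin k => (⟨i / b ^ (k - 1 - (j : ℕ)) % b, Nat.mod_lt _ hb⟩ : Fin b)

end
/-! ### Auxiliary development -/

noncomputable section YAux
open Classical

namespace YAux

variable {b : ℕ}

/-! #### Basic order lemmas -/

theorem lexLE_refl (x : ℕ → Fin b) : lexLE b x x := Or.inl rfl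

theorem lexLT_of_ne {x y : ℕ → Fin b} (h : x ≠ y) : lexLT b x y ∨ lexLT b y x := by
  have hex : ∃ n, x n ≠ y n := Function.ne_iff.mp h
  have h2 : ∀ m, m < Nat.find hex → x m = y m := fun m hm => by
    by_contra hc; exact Nat.find_min hex hm hc
  rcases lt_or_gt_of_ne (Nat.find_spec hex) with h | h
  · exact Or.inl ⟨Nat.find hex, h2, h⟩
  · exact Or.inr ⟨Nat.find hex, fun m hm => (h2 m hm).symm, h⟩

theorem lexLT_asymm {x y : ℕ → Fin b} (h1 : lexLT b x y) (h2 : lexLT b y x) : False := by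
  obtain ⟨n, hn1, hn2⟩ := h1
  obtain ⟨m, hm1, hm2⟩ := h2
  rcases lt_trichotomy n m with h | h | h
  · rw [hm1 n h] at hn2; exact absurd hn2 (lt_irrefl _)
  · subst h; exact absurd (hn2.trans hm2) (lt_irrefl _)
  · rw [hn1 m h] at hm2; exact absurd hm2 (lt_irrefl _)

theorem lexLT_irrefl (x : ℕ → Fin b) : ¬ lexLT b x x := fun h => lexLT_asymm h h

theorem lexLT_trans {x y z : ℕ → Fin b} (h1 : lexLT b x y) (h2 : lexLT b y z) :
    lexLT b x z := by
  obtain ⟨n, hn1, hn2⟩ := h1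
  obtain ⟨m, hm1, hm2⟩ := h2
  refine ⟨min n m, fun k hk => ?_, ?_⟩
  · rw [hn1 k (lt_of_lt_of_le hk (min_le_left _ _)),
      hm1 k (lt_of_lt_of_le hk (min_le_right _ _))]
  · rcases lt_trichotomy n m with h | h | h
    · rw [min_eq_left h.le, ← hm1 n h]; exact hn2
    · subst h; rw [min_self]; exact hn2.trans hm2
    · rw [min_eq_right h.le, hn1 m h]; exact hm2

theorem lexLE_trans {x y z : ℕ → Fin b} (h1 : lexLE b x y) (h2 : lexLE b y z) :
    lexLE b x z := by
  rcases h1 with rfl | h1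
  · exact h2
  rcases h2 with rfl | h2
  · exact Or.inr h1
  · exact Or.inr (lexLT_trans h1 h2)

theorem lexLE_antisymm {x y : ℕ → Fin b} (h1 : lexLE b x y) (h2 : lexLE b y x) : x = y := by
  rcases h1 with rfl | h1
  · rfl
  rcases h2 with rfl | h2
  · rfl
  · exact absurd (lexLT_asymm h1 h2) not_false

theorem lexLT_of_not_le {x y : ℕ → Fin b} (h : ¬ lexLE b x y) : lexLT b y x := by
  have hne : x ≠ y := fun he => h (Or.inl he)
  rcases lexLT_of_ne hne with h1 | h1
  · exact absurd (Or.inr h1) h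
  · exact h1

theorem not_lexLE_of_lt {x y : ℕ → Fin b} (h : lexLT b x y) : ¬ lexLE b y x := by
  rintro (rfl | h2)
  · exact lexLT_irrefl _ h
  · exact lexLT_asymm h h2

theorem lexLT_of_lt_of_le {x y z : ℕ → Fin b} (h1 : lexLT b x y) (h2 : lexLE b y z) :
    lexLT b x z := by
  rcases h2 with rfl | h2
  · exact h1
  · exact lexLT_trans h1 h2

theorem lexLT_of_le_of_lt {x y z : ℕ → Fin b} (h1 : lexLE b x y) (h2 : lexLT b y z) :
    lexLT b x z := by
  rcases h1 with rfl | h1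
  · exact h2
  · exact lexLT_trans h1 h2

theorem lexLE_of_prefix_pointwise {a z : ℕ → Fin b} (n : ℕ)
    (h1 : ∀ m, m < n → a m = z m) (h2 : ∀ k, n ≤ k → a k ≤ z k) : lexLE b a z := by
  by_cases he : a = z
  · exact Or.inl he
  have hex : ∃ k, a k ≠ z k := Function.ne_iff.mp he
  refine Or.inr ⟨Nat.find hex, fun m hm => ?_, ?_⟩
  · by_contra hc; exact Nat.find_min hex hm hc
  · have hne : a (Nat.find hex) ≠ z (Nat.find hex) := Nat.find_spec hex
    have hk : n ≤ Nat.find hex := by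
      by_contra hc; push_neg at hc; exact hne (h1 _ hc)
    exact lt_of_le_of_ne (h2 _ hk) hne

/-! #### Topology -/

theorem cylinder_subset_of_isOpen {U : Set (ℕ → Fin b)} (hU : IsOpen U)
    {x : ℕ → Fin b} (hx : x ∈ U) :
    ∃ N, ∀ y : ℕ → Fin b, (∀ i, i < N → y i = x i) → y ∈ U := by
  obtain ⟨I, u, hIu, hsub⟩ := isOpen_pi_iff.mp hU x hx
  refine ⟨I.sup id + 1, fun y hy => ?_⟩
  apply hsub
  intro a ha
  have : y a = x a := hy a (Nat.lt_succ_of_le (Finset.le_sup (f := id) ha))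
  rw [this]; exact (hIu a ha).2

theorem W_eq_iInter (s : List (Fin b)) :
    W b s = ⋂ i : Fin s.length, (fun x : ℕ → Fin b => x (i : ℕ)) ⁻¹' {s.get i} := by
  ext x
  simp only [W, Set.mem_setOf_eq, Set.mem_iInter, Set.mem_preimage, Set.mem_singleton_iff]
  exact ⟨fun h i => h i i.2, fun h i hi => h ⟨i, hi⟩⟩

theorem isClosed_W (s : List (Fin b)) : IsClosed (W b s) := by
  rw [W_eq_iInter]
  exact isClosed_iInter fun i =>
    IsClosed.preimage (continuous_apply ((i : ℕ))) isClosed_singleton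

theorem isOpen_W (s : List (Fin b)) : IsOpen (W b s) := by
  rw [W_eq_iInter]
  exact isOpen_iInter_of_finite fun i =>
    IsOpen.preimage (continuous_apply ((i : ℕ))) (isOpen_discrete _)

theorem mem_W_ofFn {n : ℕ} (g : Fin n → Fin b) (x : ℕ → Fin b) :
    x ∈ W b (List.ofFn g) ↔ ∀ i : Fin n, x i = g i := by
  simp only [W, Set.mem_setOf_eq, List.length_ofFn, List.get_ofFn]
  constructor
  · intro h i
    simpa using h i i.2
  · intro h i hi
    simpa using h ⟨i, hi⟩

theorem exists_greatest_of_closed {S : Set (ℕ → Fin b)}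
    (hS : IsClosed S) (hne : S.Nonempty) : ∃ x, IsGreatestLex b S x := by
  let step : ℕ → Set (ℕ → Fin b) → Set (ℕ → Fin b) := fun n T =>
    {x ∈ T | ∀ y ∈ T, y n ≤ x n}
  let E : ℕ → Set (ℕ → Fin b) := fun n => Nat.rec S (fun n T => step n T) n
  have hstep_ne : ∀ n (T : Set (ℕ → Fin b)), T.Nonempty → (step n T).Nonempty := by
    rintro n T ⟨x, hx⟩
    have hne' : (Finset.univ.filter (fun j : Fin b => ∃ y ∈ T, y n = j)).Nonempty :=
      ⟨x n, by simp only [Finset.mem_filter, Finset.mem_univ, true_and]; exact ⟨x, hx, rfl⟩⟩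
    have hjmem := (Finset.univ.filter (fun j : Fin b => ∃ y ∈ T, y n = j)).max'_mem hne'
    rw [Finset.mem_filter] at hjmem
    obtain ⟨-, y, hyT, hyn⟩ := hjmem
    refine ⟨y, hyT, fun z hz => ?_⟩
    rw [hyn]
    exact Finset.le_max' _ _ (by
      simp only [Finset.mem_filter, Finset.mem_univ, true_and]; exact ⟨z, hz, rfl⟩)
  have hEne : ∀ n, (E n).Nonempty := by
    intro n; induction n with
    | zero => exact hne
    | succ n ih => exact hstep_ne n _ ih
  have hEsub : ∀ n, E n ⊆ S := by
    intro n; induction n with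
    | zero => exact subset_rfl
    | succ n ih => exact fun x hx => ih hx.1
  choose xc hxc using hEne
  set M : ℕ → Fin b := fun n => xc (n+1) n with hM
  have hxcP : ∀ k, xc (k+1) ∈ E k ∧ ∀ z ∈ E k, z k ≤ xc (k+1) k := fun k => hxc (k+1)
  have hagree : ∀ n, ∀ x ∈ E (n+1), x n = M n := by
    intro n x hx
    have hx' : x ∈ E n ∧ ∀ y ∈ E n, y n ≤ x n := hx
    exact le_antisymm ((hxcP n).2 x hx'.1) (hx'.2 (xc (n+1)) (hxcP n).1)
  have hagree' : ∀ n, ∀ x ∈ E n, ∀ m, m < n → x m = M m := by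
    intro n
    induction n with
    | zero => intro x _ m hm; omega
    | succ n ih =>
      intro x hx m hm
      have hx' : x ∈ E n ∧ ∀ y ∈ E n, y n ≤ x n := hx
      rcases Nat.lt_succ_iff_lt_or_eq.mp hm with h | rfl
      · exact ih x hx'.1 m h
      · exact hagree m x hx
  have hMS : M ∈ S := by
    rw [← hS.closure_eq, mem_closure_iff]
    intro U hU hMU
    obtain ⟨N, hN⟩ := cylinder_subset_of_isOpen hU hMU
    exact ⟨xc N, hN _ (fun i hi => hagree' N (xc N) (hxc N) i hi), hEsub N (hxc N)⟩
  refine ⟨M, hMS, fun y hy => ?_⟩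
  by_contra hc
  obtain ⟨n, hn1, hn2⟩ := lexLT_of_not_le hc
  have hyE : ∀ k, k ≤ n → y ∈ E k := by
    intro k hk
    induction k with
    | zero => exact hy
    | succ k ih =>
      show y ∈ E k ∧ ∀ z ∈ E k, z k ≤ y k
      refine ⟨ih (Nat.le_of_succ_le hk), fun z hz => ?_⟩
      have h1 : y k = M k := (hn1 k hk).symm
      rw [h1]
      exact (hxcP k).2 z hz
  have hlast : y n ≤ M n := (hxcP n).2 y (hyE n le_rfl)
  exact absurd (lt_of_lt_of_le hn2 hlast) (lt_irrefl _)


/-! #### digits and special sequences -/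

variable (hb : 2 ≤ b)

def topd : Fin b := ⟨b-1, by omega⟩

def zd : Fin b := ⟨0, by omega⟩

theorem le_topd (j : Fin b) : j ≤ topd hb := by
  have := j.2
  simp only [topd, Fin.le_def]
  omega

theorem zd_le (j : Fin b) : zd hb ≤ j := by
  simp only [zd, Fin.le_def]
  omega

def topSeq : ℕ → Fin b := fun _ => topd hb

theorem isTop_iff (x : ℕ → Fin b) :
    (∀ n, ∀ j : Fin b, j ≤ x n) ↔ x = topSeq hb :=
  ⟨fun h => funext fun n => le_antisymm (le_topd hb _) (h n _),
   fun h n j => by rw [h]; exact le_topd hb j⟩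

theorem lexLE_topSeq (x : ℕ → Fin b) : lexLE b x (topSeq hb) :=
  lexLE_of_prefix_pointwise 0 (fun m hm => absurd hm (Nat.not_lt_zero m))
    (fun k _ => le_topd hb _)

/-- increase digit at `n`, then all zeros. -/
def bump (c : ℕ → Fin b) (n : ℕ) : ℕ → Fin b :=
  fun k => if k < n then c k else if k = n then ⟨min ((c n).val + 1) (b-1), by omega⟩
    else zd hb

/-- decrease digit at `n`, then all top digits. -/
def dropSeq (c : ℕ → Fin b) (n : ℕ) : ℕ → Fin b :=
  fun k => if k < n then c k else if k = n then ⟨(c n).val - 1, by omega⟩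
    else topd hb

variable {c : ℕ → Fin b} {n : ℕ}

theorem bump_lt {k : ℕ} (h : k < n) : bump hb c n k = c k := if_pos h

theorem bump_at_val : (bump hb c n n).val = min ((c n).val + 1) (b-1) := by
  simp [bump]

theorem bump_gt {k : ℕ} (h : n < k) : bump hb c n k = zd hb := by
  simp only [bump]
  rw [if_neg (by omega), if_neg (by omega)]

theorem drop_lt {k : ℕ} (h : k < n) : dropSeq hb c n k = c k := if_pos h

theorem drop_at_val : (dropSeq hb c n n).val = (c n).val - 1 := by
  simp [dropSeq]

theorem drop_gt {k : ℕ} (h : n < k) : dropSeq hb c n k = topd hb := by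
  simp only [dropSeq]
  rw [if_neg (by omega), if_neg (by omega)]

theorem lexLT_bump (h : (c n).val < b - 1) : lexLT b c (bump hb c n) :=
  ⟨n, fun m hm => (bump_lt hb hm).symm,
    Fin.lt_def.mpr (by rw [bump_at_val hb]; omega)⟩

theorem lexLT_drop (h : 0 < (c n).val) : lexLT b (dropSeq hb c n) c :=
  ⟨n, fun m hm => drop_lt hb hm,
    Fin.lt_def.mpr (by rw [drop_at_val hb]; omega)⟩

theorem not_topd_val {j : Fin b} (h : j ≠ topd hb) : j.val < b - 1 := by
  have h1 := j.2
  have h2 : j.val ≠ b - 1 := fun hc => h (Fin.ext (by rw [hc]; rfl))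
  omega

/-- `bump` is the immediate successor when everything above `n` is the top digit. -/
theorem bump_is_succ {y : ℕ → Fin b} {i₀ : ℕ} (h0 : (y i₀).val < b - 1)
    (habove : ∀ m, i₀ < m → y m = topd hb) :
    lexLT b y (bump hb y i₀) ∧ ∀ z, lexLT b y z → lexLE b (bump hb y i₀) z := by
  refine ⟨lexLT_bump hb h0, fun z hz => ?_⟩
  obtain ⟨m, hm1, hm2⟩ := hz
  have hmle : m ≤ i₀ := by
    by_contra hc
    push_neg at hc
    rw [habove m hc] at hm2
    exact absurd hm2 (not_lt.mpr (le_topd hb _))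
  rcases lt_or_eq_of_le hmle with hmlt | rfl
  · exact Or.inr ⟨m, fun k hk => by rw [bump_lt hb (hk.trans hmlt)]; exact hm1 k hk,
      by rw [bump_lt hb hmlt]; exact hm2⟩
  · have hle : (bump hb y m) m ≤ z m := by
      rw [Fin.le_def, bump_at_val hb]
      have h2 := Fin.lt_def.mp hm2
      have h3 := (z m).2
      omega
    rcases eq_or_lt_of_le hle with heq | hlt
    · refine lexLE_of_prefix_pointwise (m+1) (fun k hk => ?_) (fun k hk => ?_)
      · rcases Nat.lt_succ_iff_lt_or_eq.mp hk with h | rfl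
        · rw [bump_lt hb h]; exact hm1 k h
        · exact heq
      · rw [bump_gt hb (by omega)]
        exact zd_le hb _
    · exact Or.inr ⟨m, fun k hk => by rw [bump_lt hb hk]; exact hm1 k hk, hlt⟩

/-- Any lex-greatest element of a nonempty open set is eventually the top digit. -/
theorem greatest_evtop {S : Set (ℕ → Fin b)} (hopen : IsOpen S) {y : ℕ → Fin b}
    (hg : IsGreatestLex b S y) : ∃ N, ∀ n, N ≤ n → y n = topd hb := by
  obtain ⟨N, hN⟩ := cylinder_subset_of_isOpen hopen hg.1
  have hy' : (fun i => if i < N then y i else topd hb) ∈ S :=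
    hN _ (fun i hi => if_pos hi)
  have h1 : lexLE b (fun i => if i < N then y i else topd hb) y := hg.2 _ hy'
  have h2 : lexLE b y (fun i => if i < N then y i else topd hb) :=
    lexLE_of_prefix_pointwise N (fun m hm => (if_pos hm).symm)
      (fun k hk => by rw [if_neg (by omega)]; exact le_topd hb _)
  have heq := lexLE_antisymm h2 h1
  refine ⟨N, fun n hn => ?_⟩
  have h3 := congrFun heq n
  rwa [if_neg (by omega)] at h3

/-- The immediate-successor package for a non-top element that is eventually top. -/
theorem exists_succ {y : ℕ → Fin b} {N : ℕ} (hN : ∀ n, N ≤ n → y n = topd hb)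
    (hy : y ≠ topSeq hb) :
    ∃ ys : ℕ → Fin b, lexLT b y ys ∧ ∀ z, lexLT b y z → lexLE b ys z := by
  have hex : ∃ i, y i ≠ topd hb := by
    by_contra hc
    push_neg at hc
    exact hy (funext hc)
  obtain ⟨i, hi⟩ := hex
  have hiN : i ≤ N := by
    by_contra hc
    push_neg at hc
    exact hi (hN i hc.le)
  classical
  have hP0 : y (Nat.findGreatest (fun i => y i ≠ topd hb) N) ≠ topd hb :=
    Nat.findGreatest_spec (P := fun i => y i ≠ topd hb) hiN hi
  have habove : ∀ m, Nat.findGreatest (fun i => y i ≠ topd hb) N < m → y m = topd hb := by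
    intro m hm
    by_cases hmN : m ≤ N
    · by_contra hc
      exact Nat.findGreatest_is_greatest hm hmN hc
    · exact hN m (by omega)
  obtain ⟨ha, hs⟩ := bump_is_succ hb (not_topd_val hb hP0) habove
  exact ⟨_, ha, hs⟩

/-! #### the maxima of preimages of cylinders -/

variable {f : (ℕ → Fin b) → (ℕ → Fin b)}

include hb

theorem preW_nonempty (hf : CSur b f) (s : List (Fin b)) : (f ⁻¹' W b s).Nonempty := by
  obtain ⟨x, hx⟩ := hf.2.1 (fun i => if h : i < s.length then s.get ⟨i, h⟩ else zd hb)
  refine ⟨x, fun i hi => ?_⟩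
  have h2 := congrFun hx i
  rw [h2]
  exact dif_pos hi

def maxW (hf : CSur b f) (s : List (Fin b)) : ℕ → Fin b :=
  Classical.choose (exists_greatest_of_closed ((isClosed_W s).preimage hf.1)
    (preW_nonempty hb hf s))

theorem maxW_spec (hf : CSur b f) (s : List (Fin b)) :
    IsGreatestLex b (f ⁻¹' W b s) (maxW hb hf s) :=
  Classical.choose_spec (exists_greatest_of_closed ((isClosed_W s).preimage hf.1)
    (preW_nonempty hb hf s))

theorem f_lt (hf : CSur b f) {x y : ℕ → Fin b} (h : lexLT b (f x) (f y)) : lexLT b x y :=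
  lexLT_of_not_le fun hle => not_lexLE_of_lt h (hf.2.2 y x hle)

theorem f_topSeq (hf : CSur b f) : f (topSeq hb) = topSeq hb := by
  obtain ⟨w, hw⟩ := hf.2.1 (topSeq hb)
  refine lexLE_antisymm (lexLE_topSeq hb _) ?_
  have h2 := hf.2.2 w (topSeq hb) (lexLE_topSeq hb w)
  rw [hw] at h2
  exact h2

theorem nomax (hf : CSur b f) {y : ℕ → Fin b} (hy : y ∈ Yset b f) :
    ∃ z ∈ Yset b f, lexLT b y z := by
  obtain ⟨⟨s, hgy⟩, hytop'⟩ := hy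
  have hytop : y ≠ topSeq hb := fun he => hytop' ((isTop_iff hb y).mpr he)
  have hcW : f y ∈ W b s := hgy.1
  have hcne : f y ≠ topSeq hb := by
    intro hc
    apply hytop
    refine lexLE_antisymm (lexLE_topSeq hb y) (hgy.2 (topSeq hb) ?_)
    show f (topSeq hb) ∈ W b s
    rw [f_topSeq hb hf, ← hc]
    exact hcW
  obtain ⟨n, hn⟩ := Function.ne_iff.mp hcne
  have hnval : (f y n).val < b - 1 := not_topd_val hb hn
  set t := List.ofFn (fun i : Fin (n+2) => bump hb (f y) n i) with ht
  have hmax := maxW_spec hb hf t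
  have hft : ∀ i : Fin (n+2), f (maxW hb hf t) i = bump hb (f y) n i :=
    (mem_W_ofFn _ _).mp hmax.1
  have hstep : lexLT b (f y) (f (maxW hb hf t)) := by
    refine ⟨n, fun m hm => ?_, ?_⟩
    · have h2 : f (maxW hb hf t) m = bump hb (f y) n m := hft ⟨m, by omega⟩
      rw [h2]
      exact (bump_lt hb hm).symm
    · have h2 : f (maxW hb hf t) n = bump hb (f y) n n := hft ⟨n, by omega⟩
      rw [h2]
      exact Fin.lt_def.mpr (by rw [bump_at_val hb]; omega)
  refine ⟨maxW hb hf t, ⟨⟨t, hmax⟩, ?_⟩, f_lt hb hf hstep⟩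
  intro hc
  have hzt : maxW hb hf t = topSeq hb := (isTop_iff hb _).mp hc
  have h3 : f (maxW hb hf t) (n+1) = bump hb (f y) n (n+1) := hft ⟨n+1, by omega⟩
  rw [hzt, f_topSeq hb hf, bump_gt hb (by omega)] at h3
  have h4 := congrArg Fin.val h3
  simp only [topSeq, topd, zd] at h4
  omega

theorem nomin (hf : CSur b f) {y : ℕ → Fin b} (hy : y ∈ Yset b f) :
    ∃ z ∈ Yset b f, lexLT b z y := by
  obtain ⟨⟨s, hgy⟩, hytop'⟩ := hy
  have hytop : y ≠ topSeq hb := fun he => hytop' ((isTop_iff hb y).mpr he)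
  have hstep1 : ∃ n, f y n ≠ zd hb := by
    by_contra hc
    push_neg at hc
    have hs0 : ∀ i (hi : i < s.length), s.get ⟨i, hi⟩ = zd hb :=
      fun i hi => ((hgy.1 i hi).symm).trans (hc i)
    obtain ⟨N, hN⟩ := greatest_evtop hb ((isOpen_W s).preimage hf.1) hgy
    obtain ⟨ys, hys1, hys2⟩ := exists_succ hb hN hytop
    have hfys : ∃ k, f ys k ≠ zd hb := by
      by_contra hc2
      push_neg at hc2
      have hmem : ys ∈ f ⁻¹' W b s := fun i hi => (hc2 i).trans (hs0 i hi).symm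
      exact not_lexLE_of_lt hys1 (hgy.2 ys hmem)
    classical
    have hk1 : f ys (Nat.find hfys) ≠ zd hb := Nat.find_spec hfys
    have hk2 : ∀ m, m < Nat.find hfys → f ys m = zd hb := fun m hm => by
      by_contra hcc
      exact Nat.find_min hfys hm hcc
    set k := Nat.find hfys with hkdef
    set w : ℕ → Fin b := fun m => if m ≤ k then zd hb else topd hb with hwdef
    obtain ⟨x, hx⟩ := hf.2.1 w
    have hzw : lexLT b (fun _ => zd hb) w :=
      ⟨k+1, fun m hm => (if_pos (by omega : m ≤ k)).symm,
        by
          have hwk : w (k+1) = topd hb := if_neg (by omega)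
          rw [hwk]
          exact Fin.lt_def.mpr (by simp only [zd, topd]; omega)⟩
    have hfy0 : f y = fun _ => zd hb := funext hc
    rcases Classical.em (lexLE b x y) with hxy | hxy
    · have h1 : lexLE b w (fun _ => zd hb) := by
        rw [← hx, ← hfy0]
        exact hf.2.2 x y hxy
      exact not_lexLE_of_lt hzw h1
    · have h2 : lexLE b ys x := hys2 x (lexLT_of_not_le hxy)
      have h3 : lexLE b (f ys) w := by
        rw [← hx]
        exact hf.2.2 ys x h2
      have hwv : lexLT b w (f ys) := by
        refine ⟨k, fun m hm => (if_pos (by omega : m ≤ k)).trans (hk2 m hm).symm, ?_⟩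
        have hwk : w k = zd hb := if_pos le_rfl
        rw [hwk]
        refine Fin.lt_def.mpr ?_
        have h5 : (f ys k).val ≠ 0 := fun hc5 => hk1 (Fin.ext hc5)
        simp only [zd]
        omega
      exact not_lexLE_of_lt hwv h3
  obtain ⟨n, hn⟩ := hstep1
  have hnval : 0 < (f y n).val := by
    have h5 : (f y n).val ≠ 0 := fun hc => hn (Fin.ext hc)
    omega
  set t := List.ofFn (fun i : Fin (n+1) => dropSeq hb (f y) n i) with ht
  have hmax := maxW_spec hb hf t
  have hft : ∀ i : Fin (n+1), f (maxW hb hf t) i = dropSeq hb (f y) n i :=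
    (mem_W_ofFn _ _).mp hmax.1
  have hstep : lexLT b (f (maxW hb hf t)) (f y) := by
    refine ⟨n, fun m hm => ?_, ?_⟩
    · have h2 : f (maxW hb hf t) m = dropSeq hb (f y) n m := hft ⟨m, by omega⟩
      rw [h2]
      exact drop_lt hb hm
    · have h2 : f (maxW hb hf t) n = dropSeq hb (f y) n n := hft ⟨n, by omega⟩
      rw [h2]
      exact Fin.lt_def.mpr (by rw [drop_at_val hb]; omega)
  refine ⟨maxW hb hf t, ⟨⟨t, hmax⟩, ?_⟩, f_lt hb hf hstep⟩
  intro hcc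
  have hzt : maxW hb hf t = topSeq hb := (isTop_iff hb _).mp hcc
  have h3 : f (maxW hb hf t) n = dropSeq hb (f y) n n := hft ⟨n, by omega⟩
  rw [hzt, f_topSeq hb hf] at h3
  have h4 := congrArg Fin.val h3
  rw [drop_at_val hb] at h4
  have h5 := (f y n).2
  simp only [topSeq, topd] at h4
  omega

theorem dense_lemma (hf : CSur b f) {y₁ y₂ : ℕ → Fin b} (h1 : y₁ ∈ Yset b f)
    (h2 : y₂ ∈ Yset b f) (h12 : lexLT b y₁ y₂) :
    ∃ z ∈ Yset b f, lexLT b y₁ z ∧ lexLT b z y₂ := by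
  obtain ⟨⟨s₁, hg1⟩, ht1'⟩ := h1
  obtain ⟨⟨s₂, hg2⟩, ht2'⟩ := h2
  have ht1 : y₁ ≠ topSeq hb := fun he => ht1' ((isTop_iff hb y₁).mpr he)
  have ht2 : y₂ ≠ topSeq hb := fun he => ht2' ((isTop_iff hb y₂).mpr he)
  obtain ⟨N₁, hN₁⟩ := greatest_evtop hb ((isOpen_W s₁).preimage hf.1) hg1
  obtain ⟨ys₁, hs₁lt, hs₁min⟩ := exists_succ hb hN₁ ht1
  have hy₁le : lexLE b ys₁ y₂ := hs₁min y₂ h12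
  have hvc : lexLE b (f ys₁) (f y₂) := hf.2.2 _ _ hy₁le
  have hc₁v : lexLT b (f y₁) (f ys₁) := by
    have hle : lexLE b (f y₁) (f ys₁) := hf.2.2 _ _ (Or.inr hs₁lt)
    rcases hle with heq | hlt
    · exfalso
      have hmem : ys₁ ∈ f ⁻¹' W b s₁ := by
        show f ys₁ ∈ W b s₁
        rw [← heq]
        exact hg1.1
      exact not_lexLE_of_lt hs₁lt (hg1.2 ys₁ hmem)
    · exact hlt
  rcases hvc with heq | hvlt
  · exfalso
    obtain ⟨N₂, hN₂⟩ := greatest_evtop hb ((isOpen_W s₂).preimage hf.1) hg2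
    obtain ⟨ys₂, hs₂lt, hs₂min⟩ := exists_succ hb hN₂ ht2
    have hc₂w : lexLT b (f y₂) (f ys₂) := by
      have hle : lexLE b (f y₂) (f ys₂) := hf.2.2 _ _ (Or.inr hs₂lt)
      rcases hle with heq2 | hlt
      · exfalso
        have hmem : ys₂ ∈ f ⁻¹' W b s₂ := by
          show f ys₂ ∈ W b s₂
          rw [← heq2]
          exact hg2.1
        exact not_lexLE_of_lt hs₂lt (hg2.2 ys₂ hmem)
      · exact hlt
    have hnomid_up : ∀ u, lexLT b (f ys₁) u → lexLT b u (f ys₂) → False := by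
      intro u hu1 hu2
      obtain ⟨x, hx⟩ := hf.2.1 u
      rcases Classical.em (lexLE b x y₂) with hxy | hxy
      · have h5 : lexLE b u (f y₂) := hx ▸ hf.2.2 x y₂ hxy
        rw [← heq] at h5
        exact not_lexLE_of_lt hu1 h5
      · have h4 : lexLE b ys₂ x := hs₂min x (lexLT_of_not_le hxy)
        have h5 : lexLE b (f ys₂) u := hx ▸ hf.2.2 _ _ h4
        exact not_lexLE_of_lt hu2 h5
    have hnomid_dn : ∀ u, lexLT b (f y₁) u → lexLT b u (f ys₁) → False := by
      intro u hu1 hu2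
      obtain ⟨x, hx⟩ := hf.2.1 u
      rcases Classical.em (lexLE b x y₁) with hxy | hxy
      · have h5 : lexLE b u (f y₁) := hx ▸ hf.2.2 x y₁ hxy
        exact not_lexLE_of_lt hu1 h5
      · have h4 : lexLE b ys₁ x := hs₁min x (lexLT_of_not_le hxy)
        have h5 : lexLE b (f ys₁) u := hx ▸ hf.2.2 _ _ h4
        exact not_lexLE_of_lt hu2 h5
    have hvw : lexLT b (f ys₁) (f ys₂) := heq ▸ hc₂w
    obtain ⟨n, hn1, hn2⟩ := hvw
    obtain ⟨n', hn1', hn2'⟩ := hc₁v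
    have hup : ∀ m, n < m → f ys₁ m = topd hb := by
      intro m hm
      by_contra hcm
      have hval : (f ys₁ m).val < b - 1 := not_topd_val hb hcm
      apply hnomid_up (bump hb (f ys₁) m) (lexLT_bump hb hval)
      exact ⟨n, fun k hk => by rw [bump_lt hb (by omega)]; exact hn1 k hk,
        by rw [bump_lt hb hm]; exact hn2⟩
    have hdn : ∀ m, n' < m → f ys₁ m = zd hb := by
      intro m hm
      by_contra hcm
      have hval : 0 < (f ys₁ m).val := by
        have h5 : (f ys₁ m).val ≠ 0 := fun hz => hcm (Fin.ext hz)
        omega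
      refine hnomid_dn (dropSeq hb (f ys₁) m) ?_ (lexLT_drop hb hval)
      exact ⟨n', fun k hk => (hn1' k hk).trans (drop_lt hb (by omega)).symm,
        by rw [drop_lt hb hm]; exact hn2'⟩
    have hcontra := (hup (max n n' + 1) (by omega)).symm.trans (hdn (max n n' + 1) (by omega))
    have h6 := congrArg Fin.val hcontra
    simp only [topd, zd] at h6
    omega
  · obtain ⟨n, hn1, hn2⟩ := hvlt
    set t := List.ofFn (fun i : Fin (n+1) => f ys₁ i) with ht
    have hmax := maxW_spec hb hf t
    have hft : ∀ i : Fin (n+1), f (maxW hb hf t) i = f ys₁ i := (mem_W_ofFn _ _).mp hmax.1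
    have hys₁mem : ys₁ ∈ f ⁻¹' W b t := by
      show f ys₁ ∈ W b t
      rw [ht]
      exact (mem_W_ofFn _ _).mpr (fun i => rfl)
    have hzge : lexLE b ys₁ (maxW hb hf t) := hmax.2 ys₁ hys₁mem
    have hy₁z : lexLT b y₁ (maxW hb hf t) := lexLT_of_lt_of_le hs₁lt hzge
    have hzy₂f : lexLT b (f (maxW hb hf t)) (f y₂) := by
      refine ⟨n, fun m hm => ?_, ?_⟩
      · have h5 : f (maxW hb hf t) m = f ys₁ m := hft ⟨m, by omega⟩
        rw [h5]
        exact hn1 m hm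
      · have h5 : f (maxW hb hf t) n = f ys₁ n := hft ⟨n, by omega⟩
        rw [h5]
        exact hn2
    refine ⟨maxW hb hf t, ⟨⟨t, hmax⟩, ?_⟩, hy₁z, f_lt hb hf hzy₂f⟩
    intro hcc
    have hzt : maxW hb hf t = topSeq hb := (isTop_iff hb _).mp hcc
    have h5 : f (maxW hb hf t) n = f ys₁ n := hft ⟨n, by omega⟩
    rw [hzt, f_topSeq hb hf] at h5
    have h7 : f ys₁ n = topd hb := h5.symm
    rw [h7] at hn2
    exact absurd hn2 (not_lt.mpr (le_topd hb _))

theorem Yset_countable (hf : CSur b f) : (Yset b f).Countable := by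
  have hsub : Yset b f ⊆ Set.range (maxW hb hf) := by
    rintro y ⟨⟨s, hgy⟩, -⟩
    exact ⟨s, lexLE_antisymm (hgy.2 _ (maxW_spec hb hf s).1) ((maxW_spec hb hf s).2 y hgy.1)⟩
  exact Set.Countable.mono hsub (Set.countable_range _)

theorem Yset_nonempty (hf : CSur b f) : (Yset b f).Nonempty := by
  have hmax := maxW_spec hb hf [zd hb]
  refine ⟨maxW hb hf [zd hb], ⟨[zd hb], hmax⟩, ?_⟩
  intro hc
  have hzt : maxW hb hf [zd hb] = topSeq hb := (isTop_iff hb _).mp hc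
  have h1 : f (maxW hb hf [zd hb]) 0 = zd hb := hmax.1 0 (by simp)
  rw [hzt, f_topSeq hb hf] at h1
  have h2 := congrArg Fin.val h1
  simp only [topSeq, topd, zd] at h2
  omega

omit hb in
/-- The lexicographic linear order on a subset of `b^ω`. -/
def subLinearOrder (S : Set (ℕ → Fin b)) : LinearOrder ↥S where
  le := fun a c => lexLE b a.1 c.1
  lt := fun a c => lexLT b a.1 c.1
  le_refl := fun a => lexLE_refl a.1
  le_trans := fun a c d h1 h2 => lexLE_trans h1 h2
  le_antisymm := fun a c h1 h2 => Subtype.ext (lexLE_antisymm h1 h2)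
  le_total := fun a c => by
    rcases Classical.em (lexLE b a.1 c.1) with h | h
    · exact Or.inl h
    · exact Or.inr (Or.inr (lexLT_of_not_le h))
  lt_iff_le_not_ge := fun a c =>
    ⟨fun h => ⟨Or.inr h, not_lexLE_of_lt h⟩,
     fun h => by
      rcases h.1 with he | h1
      · exact absurd (Or.inl he.symm : lexLE b c.1 a.1) h.2
      · exact h1⟩
  toDecidableLE := fun a c => Classical.dec _

end YAux

end YAux

/-- for every `f ∈ C↑_sur(b^ω)`, the set `Y_f` is a subset of `A_b` that
is order isomorphic to `ℚ` under `≤_lex`. -/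
theorem Yset_subset_Ab_iso_Q (b : ℕ) (hb : 2 ≤ b)
    (f : (ℕ → Fin b) → (ℕ → Fin b)) (hf : CSur b f) :
    Yset b f ⊆ AbSet b ∧ OrderIsoQ b (Yset b f) := by
  constructor
  · rintro y ⟨⟨s, hgy⟩, hytop⟩
    obtain ⟨N, hN⟩ := YAux.greatest_evtop hb ((YAux.isOpen_W s).preimage hf.1) hgy
    exact ⟨⟨N, fun n hn j => by rw [hN n hn]; exact YAux.le_topd hb j⟩, hytop⟩
  · have hcnt : Countable ↥(Yset b f) := (YAux.Yset_countable hb hf).to_subtype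
    have hne : Nonempty ↥(Yset b f) := (YAux.Yset_nonempty hb hf).to_subtype
    have hnomax : @NoMaxOrder ↥(Yset b f)
        (YAux.subLinearOrder (Yset b f)).toPartialOrder.toPreorder.toLT :=
      @NoMaxOrder.mk ↥(Yset b f) (YAux.subLinearOrder (Yset b f)).toPartialOrder.toPreorder.toLT (fun a => by
        obtain ⟨z, hz, hlt⟩ := YAux.nomax hb hf a.2
        exact ⟨⟨z, hz⟩, hlt⟩)
    have hnomin : @NoMinOrder ↥(Yset b f)
        (YAux.subLinearOrder (Yset b f)).toPartialOrder.toPreorder.toLT :=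
      @NoMinOrder.mk ↥(Yset b f) (YAux.subLinearOrder (Yset b f)).toPartialOrder.toPreorder.toLT (fun a => by
        obtain ⟨z, hz, hlt⟩ := YAux.nomin hb hf a.2
        exact ⟨⟨z, hz⟩, hlt⟩)
    have hdens : @DenselyOrdered ↥(Yset b f)
        (YAux.subLinearOrder (Yset b f)).toPartialOrder.toPreorder.toLT :=
      @DenselyOrdered.mk ↥(Yset b f) (YAux.subLinearOrder (Yset b f)).toPartialOrder.toPreorder.toLT (fun a c h => by
        obtain ⟨z, hz, h1, h2⟩ := YAux.dense_lemma hb hf a.2 c.2 h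
        exact ⟨⟨z, hz⟩, h1, h2⟩)
    obtain ⟨e⟩ := @Order.iso_of_countable_dense ℚ ↥(Yset b f) _
      (YAux.subLinearOrder (Yset b f)) _ _ _ _ _ hcnt hdens hnomin hnomax hne
    refine ⟨e.toEquiv, fun p q => ?_⟩
    exact Iff.symm (@OrderIso.le_iff_le ℚ ↥(Yset b f) _ (YAux.subLinearOrder (Yset b f)).toPartialOrder.toPreorder.toLE e p q)
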